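/- arXiv:2010.11366 — 4 statements merged into one kernel-verified Lean document; each statement's English description precedes it below -/
import Mathlib

section
/- Let H be a real symmetric d×d matrix satisfying μI ⪯ H ⪯ LI with 0 < μ ≤ L, and let 0 < γ ≤ 1/L. Then for all a, b ∈ ℝ^d: ⟨a − b, b⟩ + ⟨b − a, a⟩ − γ ⟨H a, b⟩ ≤ −(γμ/2) (‖a‖² + ‖b‖²). -/
open Matrix

/-- If `H` is a real symmetric `d × d` matrix with `μ I ⪯ H ⪯ L I`,
`0 < μ ≤ L` and `0 < γ ≤ 1/L`, then for all `a, b ∈ ℝ^d`: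
`⟨a − b, b⟩ + ⟨b − a, a⟩ − γ ⟨H a, b⟩ ≤ −(γ μ / 2)(‖a‖² + ‖b‖²)`. -/
theorem contraction_quadratic_form
    (d : ℕ) (μ L γ : ℝ) (hμ : 0 < μ) (hμL : μ ≤ L)
    (hγ : 0 < γ) (hγL : γ ≤ 1 / L)
    (H : Matrix (Fin d) (Fin d) ℝ) (hH : H.IsHermitian)
    (hlow : (H - μ • (1 : Matrix (Fin d) (Fin d) ℝ)).PosSemidef)
    (hup : ((L • (1 : Matrix (Fin d) (Fin d) ℝ)) - H).PosSemidef) :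
    ∀ a b : Fin d → ℝ,
      (a - b) ⬝ᵥ b + (b - a) ⬝ᵥ a - γ * (H.mulVec a ⬝ᵥ b)
        ≤ -(γ * μ / 2) * (a ⬝ᵥ a + b ⬝ᵥ b) := by
  intro a b
  have hL : 0 < L := lt_of_lt_of_le hμ hμL
  have hγL' : γ * L ≤ 1 := by
    rw [le_div_iff₀ hL] at hγL; linarith
  -- symmetry of H
  have hsym : H.mulVec a ⬝ᵥ b = a ⬝ᵥ H.mulVec b := by
    have hT : Hᵀ = H := by
      have := hH.eq
      rwa [Matrix.conjTranspose_eq_transpose_of_trivial] at this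
    rw [Matrix.dotProduct_mulVec, ← Matrix.mulVec_transpose, hT]
  have h1 := hlow.dotProduct_mulVec_nonneg a
  have h2 := hlow.dotProduct_mulVec_nonneg b
  have h3 := hup.dotProduct_mulVec_nonneg (a - b)
  have hs : (0:ℝ) ≤ a ⬝ᵥ a := by simpa using dotProduct_star_self_nonneg a
  have ht : (0:ℝ) ≤ b ⬝ᵥ b := by simpa using dotProduct_star_self_nonneg b
  have hcauchy : (0:ℝ) ≤ (a - b) ⬝ᵥ (a - b) := by simpa using dotProduct_star_self_nonneg (a-b)
  simp only [star_trivial, Matrix.sub_mulVec, Matrix.smul_mulVec,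
    Matrix.one_mulVec, Matrix.mulVec_sub, dotProduct_sub, sub_dotProduct,
    dotProduct_smul, smul_eq_mul] at h1 h2 h3 hcauchy ⊢
  have hba : b ⬝ᵥ H.mulVec a = a ⬝ᵥ H.mulVec b := by
    rw [← hsym, dotProduct_comm]
  rw [hsym]
  rw [hba] at h3
  have hab' : a ⬝ᵥ b = b ⬝ᵥ a := dotProduct_comm a b
  nlinarith [mul_nonneg hγ.le (sub_nonneg.2 hcauchy), mul_nonneg hγ.le h1,
    mul_nonneg hγ.le h2, mul_nonneg (mul_nonneg hγ.le hL.le) hcauchy,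
    mul_nonneg (sub_nonneg.2 hγL') hcauchy]
end

section
/- Let f : ℝ^d → ℝ be twice continuously differentiable with μ I ⪯ ∇²f(x) ⪯ L I for all x ∈ ℝ^d, where 0 < μ ≤ L, and suppose ∇f(0) = 0. Let 0 < γ ≤ 1/L and h > 0. Then for all x, w ∈ ℝ^d: 2h⟨x, w − x⟩ + 2h⟨w, x − w⟩ − 2γh⟨w, ∇f(x)⟩ ≤ −γμh(‖x‖² + ‖w‖²). -/
open scoped RealInnerProductSpace

/-- Drift inequality for the Lyapunov condition of RC-ULMC: if `f` is `C²` with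
`μI ⪯ ∇²f ⪯ LI` everywhere (`0 < μ ≤ L`), `∇f(0) = 0`, `0 < γ ≤ 1/L` and
`h > 0`, then for all `x, w`:
`2h⟨x, w−x⟩ + 2h⟨w, x−w⟩ − 2γh⟨w, ∇f(x)⟩ ≤ −γμh(‖x‖² + ‖w‖²)`. -/
theorem lyapunov_drift_inequality
    (d : ℕ) (μ L γ h : ℝ) (hμ : 0 < μ) (hμL : μ ≤ L)
    (hγ : 0 < γ) (hγL : γ ≤ 1 / L) (hh : 0 < h)
    (f : EuclideanSpace ℝ (Fin d) → ℝ) (hf : ContDiff ℝ 2 f)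
    (hHess : ∀ x v : EuclideanSpace ℝ (Fin d),
      μ * ‖v‖ ^ 2 ≤ ⟪fderiv ℝ (gradient f) x v, v⟫ ∧
        ⟪fderiv ℝ (gradient f) x v, v⟫ ≤ L * ‖v‖ ^ 2)
    (hgrad0 : gradient f 0 = 0) :
    ∀ x w : EuclideanSpace ℝ (Fin d),
      2 * h * ⟪x, w - x⟫ + 2 * h * ⟪w, x - w⟫ - 2 * γ * h * ⟪w, gradient f x⟫
        ≤ -(γ * μ * h) * (‖x‖ ^ 2 + ‖w‖ ^ 2) := by
  intro x w
  have hL : (0 : ℝ) < L := hμ.trans_le hμL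
  have hγL' : γ * L ≤ 1 := by
    rw [← le_div_iff₀ hL]; exact hγL
  -- differentiability of the gradient and of the fderiv
  have hfd1 : ContDiff ℝ 1 (fderiv ℝ f) := hf.fderiv_right (by norm_num)
  have hgdiff : Differentiable ℝ (gradient f) := by
    have hco : gradient f = fun z =>
        (InnerProductSpace.toDual ℝ (EuclideanSpace ℝ (Fin d))).symm (fderiv ℝ f z) := rfl
    rw [hco]
    exact fun z => ((InnerProductSpace.toDual ℝ
      (EuclideanSpace ℝ (Fin d))).symm.differentiable.differentiableAt).comp z
      ((hfd1.differentiable (by norm_num)) z)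
  -- relate the derivative of the gradient to the second derivative of `f`
  have hrel : ∀ y u v : EuclideanSpace ℝ (Fin d),
      ⟪v, fderiv ℝ (gradient f) y u⟫ = fderiv ℝ (fderiv ℝ f) y u v := by
    intro y u v
    have h1 : HasFDerivAt (fun z => ⟪v, gradient f z⟫)
        ((innerSL ℝ v).comp (fderiv ℝ (gradient f) y)) y :=
      (innerSL ℝ v).hasFDerivAt.comp y (hgdiff y).hasFDerivAt
    have h2 : HasFDerivAt (fun z => fderiv ℝ f z v)
        ((ContinuousLinearMap.apply ℝ ℝ v).comp (fderiv ℝ (fderiv ℝ f) y)) y :=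
      (ContinuousLinearMap.apply ℝ ℝ v).hasFDerivAt.comp y
        ((hfd1.differentiable (by norm_num)) y).hasFDerivAt
    have heq : (fun z => ⟪v, gradient f z⟫) = (fun z => fderiv ℝ f z v) := by
      funext z
      rw [real_inner_comm]
      exact InnerProductSpace.toDual_symm_apply
    rw [heq] at h1
    have := h1.unique h2
    have happ := congrFun (congrArg (fun (T : _ →L[ℝ] ℝ) => (T : _ → ℝ)) this) u
    simpa using happ
  -- symmetry of the Hessian
  have hsym : ∀ y u v : EuclideanSpace ℝ (Fin d),
      ⟪fderiv ℝ (gradient f) y u, v⟫ = ⟪fderiv ℝ (gradient f) y v, u⟫ := by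
    intro y u v
    have hss : IsSymmSndFDerivAt ℝ f y :=
      hf.contDiffAt.isSymmSndFDerivAt (by simp [minSmoothness_of_isRCLikeNormedField])
    rw [← real_inner_comm (fderiv ℝ (gradient f) y u) v,
      ← real_inner_comm (fderiv ℝ (gradient f) y v) u, hrel y u v, hrel y v u]
    exact hss u v
  -- pointwise lower bound for the cross term
  have hcross : ∀ y : EuclideanSpace ℝ (Fin d),
      μ * ‖x‖ ^ 2 + μ * ‖w‖ ^ 2 - L * ‖x - w‖ ^ 2
      ≤ 2 * ⟪w, fderiv ℝ (gradient f) y x⟫ := by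
    intro y
    have hQxw := (hHess y (x - w)).2
    have hQx := (hHess y x).1
    have hQw := (hHess y w).1
    set B := fderiv ℝ (gradient f) y with hB
    have hexp : ⟪B (x - w), x - w⟫
        = ⟪B x, x⟫ - ⟪B x, w⟫ - ⟪B w, x⟫ + ⟪B w, w⟫ := by
      rw [map_sub, inner_sub_left, inner_sub_right, inner_sub_right]; ring
    have h2 : ⟪w, B x⟫ = ⟪B x, w⟫ := real_inner_comm _ _
    have h3 : ⟪B x, w⟫ = ⟪B w, x⟫ := hsym y x w
    rw [hexp] at hQxw
    linarith
  -- integrate along the segment from 0 to x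
  set C : ℝ := μ * ‖x‖ ^ 2 + μ * ‖w‖ ^ 2 - L * ‖x - w‖ ^ 2 with hC
  have hderiv : ∀ t : ℝ, HasDerivAt
      (fun t : ℝ => 2 * ⟪w, gradient f (t • x)⟫ - t * C)
      (2 * ⟪w, fderiv ℝ (gradient f) (t • x) x⟫ - C) t := by
    intro t
    have hc : HasDerivAt (fun t : ℝ => t • x) x t := by
      simpa using (hasDerivAt_id t).smul_const x
    have hg : HasDerivAt (fun t : ℝ => gradient f (t • x))
        (fderiv ℝ (gradient f) (t • x) x) t :=
      by have := (hgdiff (t • x)).hasFDerivAt.comp_hasDerivAt t hc; exact this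
    have hi : HasDerivAt (fun t : ℝ => ⟪w, gradient f (t • x)⟫)
        (⟪w, fderiv ℝ (gradient f) (t • x) x⟫) t := by
      simpa using (hasDerivAt_const t w).inner (𝕜 := ℝ) hg
    have := ((hi.const_mul 2).sub ((hasDerivAt_id t).mul_const C)); rw [one_mul] at this; exact this
  have hmono : Monotone (fun t : ℝ => 2 * ⟪w, gradient f (t • x)⟫ - t * C) := by
    apply monotone_of_deriv_nonneg
    · exact fun t => (hderiv t).differentiableAt
    · intro t
      rw [(hderiv t).deriv]
      have := hcross (t • x)
      linarith
  have hkey : C ≤ 2 * ⟪w, gradient f x⟫ := by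
    have h01 := hmono (le_of_lt one_pos : (0:ℝ) ≤ 1)
    simp only [zero_smul, one_smul, hgrad0, inner_zero_right, mul_zero, zero_mul,
      zero_sub, one_mul, sub_zero, neg_zero] at h01
    linarith
  -- final algebra
  have hsq : ‖x - w‖ ^ 2 = ‖x‖ ^ 2 - 2 * ⟪x, w⟫ + ‖w‖ ^ 2 := norm_sub_sq_real x w
  have e1 : ⟪x, w - x⟫ = ⟪x, w⟫ - ‖x‖ ^ 2 := by
    rw [inner_sub_right, real_inner_self_eq_norm_sq]
  have e2 : ⟪w, x - w⟫ = ⟪x, w⟫ - ‖w‖ ^ 2 := by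
    rw [inner_sub_right, real_inner_self_eq_norm_sq, real_inner_comm]
  rw [e1, e2]
  have hnx : (0:ℝ) ≤ ‖x - w‖ ^ 2 := sq_nonneg _
  nlinarith [mul_nonneg hh.le hnx, mul_le_of_le_one_left hnx hγL',
    mul_nonneg (mul_nonneg hγ.le hh.le) (sub_nonneg.2 hkey),
    mul_pos hγ hh]
end

section
/- Let d ≥ 1 be an integer and let h be a real number with 0 < h < 10^{-8}/d. Suppose a real sequence (a_m)_{m≥0} satisfies a_0 ≥ (320001/160000) d and a_{m+1} ≥ (1 − 2h + 2.9 d h²) a_m + 4dh − 5.7 d² h² for all m ≥ 0. Then for all m ≥ 0: a_m ≥ (1 − 2h)^m · d/320000 + (4d − 5.7 d² h)/(2 − 2.9 d h). -/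
/-- Deterministic recursion in the tightness example: if `0 < h < 10⁻⁸/d`,
`a_0 ≥ (320001/160000) d` and
`a_{m+1} ≥ (1 − 2h + 2.9dh²) a_m + 4dh − 5.7d²h²`, then for all `m`,
`a_m ≥ (1 − 2h)^m · d/320000 + (4d − 5.7d²h)/(2 − 2.9dh)`. -/
theorem lower_bound_recursion
    (d : ℕ) (hd : 1 ≤ d) (h : ℝ) (hh : 0 < h)
    (hhd : h < (1 / 100000000 : ℝ) / d)
    (a : ℕ → ℝ) (ha0 : (320001 / 160000 : ℝ) * d ≤ a 0)
    (hrec : ∀ m, (1 - 2 * h + 2.9 * d * h ^ 2) * a m + 4 * d * h - 5.7 * d ^ 2 * h ^ 2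
      ≤ a (m + 1)) :
    ∀ m : ℕ, (1 - 2 * h) ^ m * ((d : ℝ) / 320000)
        + (4 * d - 5.7 * d ^ 2 * h) / (2 - 2.9 * d * h) ≤ a m := by
  have hd1 : (1 : ℝ) ≤ (d : ℝ) := by exact_mod_cast hd
  have hd0 : (0 : ℝ) < (d : ℝ) := by linarith
  have hdh : (d : ℝ) * h < 1 / 100000000 := by
    have := mul_lt_mul_of_pos_left hhd hd0
    calc (d : ℝ) * h < (d : ℝ) * ((1 / 100000000 : ℝ) / d) := this
      _ = 1 / 100000000 := by field_simp
  have hD : (0 : ℝ) < 2 - 2.9 * d * h := by nlinarith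
  have h1 : (0 : ℝ) < 1 - 2 * h := by nlinarith
  have hr : (0 : ℝ) < 1 - 2 * h + 2.9 * d * h ^ 2 := by nlinarith
  set c : ℝ := (4 * d - 5.7 * d ^ 2 * h) / (2 - 2.9 * d * h) with hc
  have hfix : (1 - 2 * h + 2.9 * (d : ℝ) * h ^ 2) * c + (4 * d * h - 5.7 * d ^ 2 * h ^ 2) = c := by
    rw [hc]
    rw [eq_div_iff hD.ne', add_mul, mul_assoc (1 - 2 * h + 2.9 * (d : ℝ) * h ^ 2), div_mul_cancel₀ _ hD.ne']
    ring
  intro m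
  induction m with
  | zero =>
    simp only [pow_zero, one_mul]
    have hcle : c ≤ (320001 / 160000 : ℝ) * d - (d : ℝ) / 320000 := by
      rw [hc, div_le_iff₀ hD]
      nlinarith [mul_le_mul_of_nonneg_left hdh.le hd0.le]
    linarith
  | succ n ih =>
    have hp : (0 : ℝ) ≤ (1 - 2 * h) ^ n * ((d : ℝ) / 320000) := by positivity
    have hstep := hrec n
    have hmono := mul_le_mul_of_nonneg_left ih hr.le
    have key : (1 - 2 * h) ^ (n + 1) * ((d : ℝ) / 320000) + c
        ≤ (1 - 2 * h + 2.9 * d * h ^ 2) * ((1 - 2 * h) ^ n * ((d : ℝ) / 320000) + c)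
          + 4 * d * h - 5.7 * d ^ 2 * h ^ 2 := by
      rw [pow_succ]
      nlinarith [mul_nonneg (by positivity : (0 : ℝ) ≤ 2.9 * (d : ℝ) * h ^ 2) hp]
    linarith
end

section
/- Let f : ℝ^d → ℝ be twice continuously differentiable with μI ⪯ ∇²f(x) ⪯ LI for all x, where 0 < μ ≤ L, and let 0 < γ ≤ 1/L. Let φ_1, …, φ_d > 0 with Σ φ_i = 1, let h > 0 satisfy h/φ_i ≤ 1/20 for every i, and set h_i = h/φ_i. Fix x, x̃, w, w̃ ∈ ℝ^d, write a = x̃ − x, b = w̃ − w, g = ∇f(x̃) − ∇f(x), and for each i define A_i = (h_i + e^{−2h_i}) b_i + (1 − h_i − e^{−2h_i}) a_i − (γ/2)(1 − e^{−2h_i}) g_i, C_i = (1 − h_i) a_i + h_i b_i, and K_i = (A_i − b_i) b_i + (C_i − a_i) a_i. Then Σ_{i=1}^d φ_i K_i ≤ (−γμh/2 + 3h²/min_i φ_i) (‖a‖² + ‖b‖²). -/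
open scoped RealInnerProductSpace

open MeasureTheory intervalIntegral

lemma exp_neg_le_quad {x : ℝ} (hx : 0 ≤ x) : Real.exp (-x) ≤ 1 - x + x ^ 2 / 2 := by
  have h4 := Real.sum_le_exp_of_nonneg hx 4
  have hsum : 1 + x + x ^ 2 / 2 + x ^ 3 / 6 ≤ Real.exp x := by
    have he : ∑ i ∈ Finset.range 4, x ^ i / (Nat.factorial i) = 1 + x + x ^ 2 / 2 + x ^ 3 / 6 := by
      norm_num [Finset.sum_range_succ, Nat.factorial]
    linarith [he ▸ h4]
  have hq : (0:ℝ) < 1 - x + x ^ 2 / 2 := by nlinarith [sq_nonneg (x - 1)]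
  have h2 : (1 - x + x ^ 2 / 2) * (1 + x + x ^ 2 / 2 + x ^ 3 / 6)
      ≤ (1 - x + x ^ 2 / 2) * Real.exp x := mul_le_mul_of_nonneg_left hsum hq.le
  have h3 : (1:ℝ) ≤ (1 - x + x ^ 2 / 2) * (1 + x + x ^ 2 / 2 + x ^ 3 / 6) := by
    nlinarith [pow_nonneg hx 3, pow_nonneg hx 4, pow_nonneg hx 5]
  have hmul : Real.exp (-x) * Real.exp x = 1 := by
    rw [← Real.exp_add]; simp
  nlinarith [Real.exp_pos x, Real.exp_pos (-x)]

lemma esq {d : ℕ} (v : EuclideanSpace ℝ (Fin d)) : ‖v‖ ^ 2 = ∑ i, (v i) ^ 2 := by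
  rw [← real_inner_self_eq_norm_sq, PiLp.inner_apply]
  simp [RCLike.inner_apply, sq]

lemma einner {d : ℕ} (u v : EuclideanSpace ℝ (Fin d)) : ⟪u, v⟫ = ∑ i, u i * v i := by
  rw [PiLp.inner_apply]; simp [RCLike.inner_apply, mul_comm]

noncomputable def dualIso (d : ℕ) :
    StrongDual ℝ (EuclideanSpace ℝ (Fin d)) →L[ℝ] EuclideanSpace ℝ (Fin d) :=
  LinearMap.mkContinuous
    { toFun := fun φ => (InnerProductSpace.toDual ℝ (EuclideanSpace ℝ (Fin d))).symm φ
      map_add' := fun φ ψ => by simp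
      map_smul' := fun c φ => by simp }
    1 (fun φ => by simp)

lemma grad_symm {d : ℕ} (f : EuclideanSpace ℝ (Fin d) → ℝ) (hf : ContDiff ℝ 2 f)
    (y u v : EuclideanSpace ℝ (Fin d)) :
    ⟪fderiv ℝ (gradient f) y u, v⟫ = ⟪fderiv ℝ (gradient f) y v, u⟫ := by
  have h1 : ContDiff ℝ 1 (fderiv ℝ f) := hf.fderiv_right (by norm_num)
  have hgrad : ContDiff ℝ 1 (gradient f) := (dualIso d).contDiff.comp h1
  have hdg : HasFDerivAt (gradient f) (fderiv ℝ (gradient f) y) y :=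
    (hgrad.differentiable one_ne_zero y).hasFDerivAt
  have hdf : HasFDerivAt (fderiv ℝ f) (fderiv ℝ (fderiv ℝ f) y) y :=
    (h1.differentiable one_ne_zero y).hasFDerivAt
  -- key : ∀ w, ⟪fderiv ℝ (gradient f) y w, v⟫ = fderiv ℝ (fderiv ℝ f) y w v
  have key : ∀ w v : EuclideanSpace ℝ (Fin d),
      ⟪fderiv ℝ (gradient f) y w, v⟫ = fderiv ℝ (fderiv ℝ f) y w v := by
    intro w v
    have hA : HasFDerivAt (fun z => ⟪gradient f z, v⟫)
        ((fderivInnerCLM ℝ (gradient f y, v)).comp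
          ((fderiv ℝ (gradient f) y).prod (0 : _ →L[ℝ] _))) y :=
      hdg.inner ℝ (hasFDerivAt_const v y)
    have hB : HasFDerivAt (fun z => fderiv ℝ f z v)
        ((fderiv ℝ f y).comp (0 : _ →L[ℝ] _)
          + (fderiv ℝ (fderiv ℝ f) y).flip v) y :=
      hdf.clm_apply (hasFDerivAt_const v y)
    have heq : (fun z => ⟪gradient f z, v⟫) = fun z => fderiv ℝ f z v := by
      funext z
      exact InnerProductSpace.toDual_symm_apply
    rw [heq] at hA
    have := hA.unique hB
    have h2 := congrArg (fun (L : _ →L[ℝ] ℝ) => L w) this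
    simpa using h2
  rw [key u v, key v u]
  have hsnd : IsSymmSndFDerivAt ℝ f y := hf.contDiffAt.isSymmSndFDerivAt (by norm_num)
  exact hsnd u v

set_option maxHeartbeats 1000000 in
lemma grad_cocoercive {d : ℕ} {μ L : ℝ} (hμL : μ ≤ L)
    (f : EuclideanSpace ℝ (Fin d) → ℝ) (hf : ContDiff ℝ 2 f)
    (hHess : ∀ x v : EuclideanSpace ℝ (Fin d),
      μ * ‖v‖ ^ 2 ≤ ⟪fderiv ℝ (gradient f) x v, v⟫ ∧
        ⟪fderiv ℝ (gradient f) x v, v⟫ ≤ L * ‖v‖ ^ 2)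
    (x x' : EuclideanSpace ℝ (Fin d)) :
    0 ≤ ⟪gradient f x' - gradient f x - μ • (x' - x), x' - x⟫ ∧
      ‖gradient f x' - gradient f x - μ • (x' - x)‖ ^ 2
        ≤ (L - μ) * ⟪gradient f x' - gradient f x - μ • (x' - x), x' - x⟫ := by
  have h1 : ContDiff ℝ 1 (fderiv ℝ f) := hf.fderiv_right (by norm_num)
  have hgrad : ContDiff ℝ 1 (gradient f) := (dualIso d).contDiff.comp h1
  set a : EuclideanSpace ℝ (Fin d) := x' - x with ha
  set g : EuclideanSpace ℝ (Fin d) := gradient f x' - gradient f x with hgdef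
  set p : EuclideanSpace ℝ (Fin d) := g - μ • a with hpdef
  have hHc : Continuous (fun y => fderiv ℝ (gradient f) y) := hgrad.continuous_fderiv one_ne_zero
  set c : ℝ → EuclideanSpace ℝ (Fin d) := fun t => x + t • a with hcdef
  have hccont : Continuous c := by fun_prop
  have hHca : Continuous fun t => fderiv ℝ (gradient f) (c t) a :=
    (hHc.comp hccont).clm_apply continuous_const
  have hcont : ∀ u v : EuclideanSpace ℝ (Fin d),
      Continuous fun t => ⟪fderiv ℝ (gradient f) (c t) u, v⟫ := fun u v =>
    (((hHc.comp hccont).clm_apply continuous_const).inner continuous_const)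
  have hInt : ∀ u v : EuclideanSpace ℝ (Fin d),
      IntervalIntegrable (fun t => ⟪fderiv ℝ (gradient f) (c t) u, v⟫) volume 0 1 := fun u v =>
    (hcont u v).intervalIntegrable 0 1
  -- FTC
  have hG : ∀ t : ℝ, HasDerivAt (fun s => gradient f (c s))
      (fderiv ℝ (gradient f) (c t) a) t := by
    intro t
    have hdc : HasDerivAt c a t := by
      have := ((hasDerivAt_id t).smul_const a).const_add x
      rw [one_smul] at this
      exact this
    have := ((hgrad.differentiable one_ne_zero (c t)).hasFDerivAt).comp_hasDerivAt t hdc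
    exact this
  have hc1 : c 1 = x' := by rw [hcdef]; simp [ha]
  have hc0 : c 0 = x := by rw [hcdef]; simp
  have hftc : (∫ t in (0:ℝ)..1, fderiv ℝ (gradient f) (c t) a) = g := by
    rw [intervalIntegral.integral_eq_sub_of_hasDerivAt (fun t _ => hG t)
      (hHca.intervalIntegrable 0 1), hc1, hc0]
  have hgv : ∀ v : EuclideanSpace ℝ (Fin d),
      ⟪g, v⟫ = ∫ t in (0:ℝ)..1, ⟪fderiv ℝ (gradient f) (c t) a, v⟫ := by
    intro v
    have h := (innerSL ℝ v).intervalIntegral_comp_comm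
      (hHca.intervalIntegrable (μ := volume) 0 1)
    rw [hftc] at h
    simp only [innerSL_apply_apply] at h
    calc ⟪g, v⟫ = ⟪v, g⟫ := real_inner_comm _ _
      _ = ∫ t in (0:ℝ)..1, ⟪v, fderiv ℝ (gradient f) (c t) a⟫ := h.symm
      _ = ∫ t in (0:ℝ)..1, ⟪fderiv ℝ (gradient f) (c t) a, v⟫ :=
        intervalIntegral.integral_congr (fun t _ => real_inner_comm _ _)
  have hlow : ∀ u : EuclideanSpace ℝ (Fin d),
      μ * ‖u‖ ^ 2 ≤ ∫ t in (0:ℝ)..1, ⟪fderiv ℝ (gradient f) (c t) u, u⟫ := by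
    intro u
    have h0 := intervalIntegral.integral_mono_on (μ := volume) zero_le_one
      (_root_.intervalIntegrable_const (c := μ * ‖u‖ ^ 2)) (hInt u u)
      (fun t _ => (hHess (c t) u).1)
    simpa using h0
  have hup : ∀ u : EuclideanSpace ℝ (Fin d),
      (∫ t in (0:ℝ)..1, ⟪fderiv ℝ (gradient f) (c t) u, u⟫) ≤ L * ‖u‖ ^ 2 := by
    intro u
    have h0 := intervalIntegral.integral_mono_on (μ := volume) zero_le_one
      (hInt u u) (_root_.intervalIntegrable_const (c := L * ‖u‖ ^ 2))
      (fun t _ => (hHess (c t) u).2)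
    simpa using h0
  have hexpand : ∀ s : ℝ,
      (∫ t in (0:ℝ)..1, ⟪fderiv ℝ (gradient f) (c t) (a + s • p), a + s • p⟫)
        = (∫ t in (0:ℝ)..1, ⟪fderiv ℝ (gradient f) (c t) a, a⟫)
          + (2 * s) * (∫ t in (0:ℝ)..1, ⟪fderiv ℝ (gradient f) (c t) a, p⟫)
          + (s * s) * (∫ t in (0:ℝ)..1, ⟪fderiv ℝ (gradient f) (c t) p, p⟫) := by
    intro s
    have e1 : ∀ t : ℝ, ⟪fderiv ℝ (gradient f) (c t) (a + s • p), a + s • p⟫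
        = ⟪fderiv ℝ (gradient f) (c t) a, a⟫
          + (2 * s) * ⟪fderiv ℝ (gradient f) (c t) a, p⟫
          + (s * s) * ⟪fderiv ℝ (gradient f) (c t) p, p⟫ := by
      intro t
      have hsym := grad_symm f hf (c t) a p
      have hmap : fderiv ℝ (gradient f) (c t) (a + s • p)
          = fderiv ℝ (gradient f) (c t) a + s • fderiv ℝ (gradient f) (c t) p := by
        rw [map_add, ContinuousLinearMap.map_smul]
      rw [hmap, inner_add_left, inner_add_right, inner_add_right, real_inner_smul_left,
        real_inner_smul_right, real_inner_smul_right, real_inner_smul_left]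
      linear_combination (-s : ℝ) * hsym
    rw [intervalIntegral.integral_congr (g := fun t =>
        ⟪fderiv ℝ (gradient f) (c t) a, a⟫
          + (2 * s) * ⟪fderiv ℝ (gradient f) (c t) a, p⟫
          + (s * s) * ⟪fderiv ℝ (gradient f) (c t) p, p⟫) (fun t _ => e1 t)]
    rw [intervalIntegral.integral_add ((hInt a a).add ((hInt a p).const_mul _))
      ((hInt p p).const_mul _),
      intervalIntegral.integral_add (hInt a a) ((hInt a p).const_mul _),
      intervalIntegral.integral_const_mul, intervalIntegral.integral_const_mul]
  have hquad : ∀ s : ℝ, 0 ≤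
      ((∫ t in (0:ℝ)..1, ⟪fderiv ℝ (gradient f) (c t) p, p⟫) - μ * ‖p‖ ^ 2) * (s * s)
      + (2 * ((∫ t in (0:ℝ)..1, ⟪fderiv ℝ (gradient f) (c t) a, p⟫) - μ * ⟪a, p⟫)) * s
      + ((∫ t in (0:ℝ)..1, ⟪fderiv ℝ (gradient f) (c t) a, a⟫) - μ * ‖a‖ ^ 2) := by
    intro s
    have h0 := hlow (a + s • p)
    rw [hexpand s] at h0
    have hn : ‖a + s • p‖ ^ 2 = ‖a‖ ^ 2 + 2 * (s * ⟪a, p⟫) + (s * s) * ‖p‖ ^ 2 := by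
      rw [norm_add_sq_real, real_inner_smul_right, norm_smul]
      simp only [Real.norm_eq_abs, mul_pow, sq_abs]
      ring
    rw [hn] at h0
    nlinarith [h0]
  have hdis := discrim_le_zero hquad
  rw [discrim] at hdis
  have hBap : (∫ t in (0:ℝ)..1, ⟪fderiv ℝ (gradient f) (c t) a, p⟫) - μ * ⟪a, p⟫
      = ‖p‖ ^ 2 := by
    have h2 : ⟪p, p⟫ = ⟪g, p⟫ - μ * ⟪a, p⟫ := by
      conv_lhs => rw [hpdef]
      rw [inner_sub_left, real_inner_smul_left]
    rw [← hgv p, ← real_inner_self_eq_norm_sq]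
    linarith [h2]
  have hBaa : (∫ t in (0:ℝ)..1, ⟪fderiv ℝ (gradient f) (c t) a, a⟫) - μ * ‖a‖ ^ 2
      = ⟪p, a⟫ := by
    have h2 : ⟪p, a⟫ = ⟪g, a⟫ - μ * ⟪a, a⟫ := by
      conv_lhs => rw [hpdef]
      rw [inner_sub_left, real_inner_smul_left]
    rw [← hgv a]
    rw [real_inner_self_eq_norm_sq] at h2
    linarith [h2]
  have hBaa_nn : 0 ≤ ⟪p, a⟫ := by
    rw [← hBaa]; linarith [hlow a]
  have hBpp : (∫ t in (0:ℝ)..1, ⟪fderiv ℝ (gradient f) (c t) p, p⟫) - μ * ‖p‖ ^ 2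
      ≤ (L - μ) * ‖p‖ ^ 2 := by linarith [hup p]
  have hBpp_nn : 0 ≤ (∫ t in (0:ℝ)..1, ⟪fderiv ℝ (gradient f) (c t) p, p⟫) - μ * ‖p‖ ^ 2 := by
    linarith [hlow p]
  rw [hBap, hBaa] at hdis
  refine ⟨hBaa_nn, ?_⟩
  by_cases hp : ‖p‖ = 0
  · rw [hp]
    norm_num
    exact mul_nonneg (by linarith) hBaa_nn
  · have hp2 : 0 < ‖p‖ ^ 2 := by positivity
    nlinarith [mul_le_mul_of_nonneg_right hBpp hBaa_nn, hdis, hp2]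

set_option maxHeartbeats 1000000 in
/-- Key contraction lemma for RC-ULMC: with `f` `C²`, `μI ⪯ ∇²f ⪯ LI`
(`0 < μ ≤ L`), `0 < γ ≤ 1/L`, probabilities `φ_i > 0` summing to `1`,
stepsizes `h_i = h/φ_i ≤ 1/20`, and the per-coordinate drift quantities
`A_i, C_i, K_i` of the one-step update in the coupled coordinates, one has
`∑ i, φ_i K_i ≤ (−γμh/2 + 3h²/min_i φ_i)(‖a‖² + ‖b‖²)`. -/
theorem weighted_cross_term_bound
    (d : ℕ) (hd : 0 < d) (μ L γ h : ℝ) (hμ : 0 < μ) (hμL : μ ≤ L)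
    (hγ : 0 < γ) (hγL : γ ≤ 1 / L) (hh : 0 < h)
    (f : EuclideanSpace ℝ (Fin d) → ℝ) (hf : ContDiff ℝ 2 f)
    (hHess : ∀ x v : EuclideanSpace ℝ (Fin d),
      μ * ‖v‖ ^ 2 ≤ ⟪fderiv ℝ (gradient f) x v, v⟫ ∧
        ⟪fderiv ℝ (gradient f) x v, v⟫ ≤ L * ‖v‖ ^ 2)
    (φ : Fin d → ℝ) (hφ : ∀ i, 0 < φ i) (hφ1 : ∑ i, φ i = 1)
    (hsmall : ∀ i, h / φ i ≤ 1 / 20)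
    (hs : Fin d → ℝ) (hhs : ∀ i, hs i = h / φ i)
    (x xt w wt a b g : EuclideanSpace ℝ (Fin d))
    (ha : a = xt - x) (hb : b = wt - w)
    (hg : g = gradient f xt - gradient f x)
    (A C K : Fin d → ℝ)
    (hA : ∀ i, A i = (hs i + Real.exp (-2 * hs i)) * b i
      + (1 - hs i - Real.exp (-2 * hs i)) * a i
      - γ / 2 * (1 - Real.exp (-2 * hs i)) * g i)
    (hC : ∀ i, C i = (1 - hs i) * a i + hs i * b i)
    (hK : ∀ i, K i = (A i - b i) * b i + (C i - a i) * a i) :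
    ∑ i, φ i * K i
      ≤ (-(γ * μ * h / 2) + 3 * h ^ 2 / (⨅ i, φ i)) * (‖a‖ ^ 2 + ‖b‖ ^ 2) := by
  haveI : Nonempty (Fin d) := ⟨⟨0, hd⟩⟩
  have hL : 0 < L := lt_of_lt_of_le hμ hμL
  have hγL' : γ * L ≤ 1 := (le_div_iff₀ hL).mp hγL
  obtain ⟨hpa_nn, hp2⟩ := grad_cocoercive hμL f hf hHess x xt
  set p : EuclideanSpace ℝ (Fin d) := gradient f xt - gradient f x - μ • (xt - x) with hpdef
  rw [← ha] at hpa_nn hp2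
  have hgp : g = p + μ • a := by
    rw [hpdef, hg, ha]; abel
  -- norm bounds
  have hpn : ‖p‖ ≤ (L - μ) * ‖a‖ := by
    by_cases hp0 : ‖p‖ = 0
    · rw [hp0]; exact mul_nonneg (by linarith) (norm_nonneg a)
    · have h0 : 0 < ‖p‖ := (norm_nonneg p).lt_of_ne' hp0
      nlinarith [hp2, real_inner_le_norm p a, h0, hμL]
  have hgn : γ * ‖g‖ ≤ ‖a‖ := by
    have h1 : ‖g‖ ≤ ‖p‖ + μ * ‖a‖ := by
      have := norm_add_le p (μ • a)
      rw [← hgp, norm_smul, Real.norm_eq_abs, abs_of_pos hμ] at this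
      exact this
    have h2 := mul_le_mul_of_nonneg_left h1 hγ.le
    have h3 := mul_le_mul_of_nonneg_left hpn hγ.le
    have h4 := mul_le_mul_of_nonneg_right hγL' (norm_nonneg a)
    nlinarith
  -- key contraction inequality
  have hkey : γ * μ / 2 * (‖a‖ ^ 2 + ‖b‖ ^ 2) ≤ ‖b - a‖ ^ 2 + γ * ⟪g, b⟫ := by
    have e1 : ‖b - a‖ ^ 2 = ‖b‖ ^ 2 - 2 * ⟪b, a⟫ + ‖a‖ ^ 2 := norm_sub_sq_real b a
    have e2 : ⟪g, b⟫ = ⟪p, b⟫ + μ * ⟪a, b⟫ := by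
      rw [hgp, inner_add_left, real_inner_smul_left]
    have e3 : ⟪p, b - a⟫ = ⟪p, b⟫ - ⟪p, a⟫ := inner_sub_right _ _ _
    have e4 : ⟪b, a⟫ = ⟪a, b⟫ := real_inner_comm _ _
    have hX : -(‖p‖ * ‖b - a‖) ≤ ⟪p, b - a⟫ := (abs_le.mp (abs_real_inner_le_norm p (b - a))).1
    have hstep : γ * (‖p‖ * ‖b - a‖) ≤ (1 - γ * μ / 2) * ‖b - a‖ ^ 2 + γ * ⟪p, a⟫ := by
      have t1 := sq_nonneg ((2 - γ * μ) * ‖b - a‖ - γ * ‖p‖)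
      have t2 := mul_le_mul_of_nonneg_left hp2 (sq_nonneg γ)
      have t3 : 0 ≤ γ * ⟪p, a⟫ * (4 - γ * μ - γ * L) := by
        apply mul_nonneg (mul_nonneg hγ.le hpa_nn)
        nlinarith [mul_pos hγ hμ]
      have hγμ : γ * μ ≤ 1 := le_trans (mul_le_mul_of_nonneg_left hμL hγ.le) hγL'
      nlinarith [t1, t2, t3, mul_pos hγ hμ, (show (0:ℝ) < 4 - 2 * (γ * μ) by linarith),
        hγ, norm_nonneg (b - a), norm_nonneg p]
    have hid : ‖b - a‖ ^ 2 + γ * ⟪g, b⟫ - γ * μ / 2 * (‖a‖ ^ 2 + ‖b‖ ^ 2)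
        = (1 - γ * μ / 2) * ‖b - a‖ ^ 2 + γ * ⟪p, a⟫ + γ * ⟪p, b - a⟫ := by
      linear_combination (γ * μ / 2) * e1 + γ * e2 - γ * e3 - γ * μ * e4
    have hX2 := mul_le_mul_of_nonneg_left hX hγ.le
    linarith
  -- per-coordinate decomposition
  have hsplit : ∀ i, φ i * K i = -(h * (b i - a i) ^ 2) - γ * h * (g i * b i)
      + (φ i * (Real.exp (-2 * hs i) - 1 + 2 * hs i)) * ((b i - a i + γ / 2 * g i) * b i) := by
    intro i
    have hφi : φ i ≠ 0 := (hφ i).ne'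
    have hh' : h = φ i * hs i := by
      rw [hhs i, mul_comm, div_mul_cancel₀ _ hφi]
    rw [hK i, hA i, hC i, hh']; ring
  have hsum : ∑ i, φ i * K i = -(h * ∑ i, (b i - a i) ^ 2) - γ * h * (∑ i, g i * b i)
      + ∑ i, (φ i * (Real.exp (-2 * hs i) - 1 + 2 * hs i)) * ((b i - a i + γ / 2 * g i) * b i) := by
    rw [Finset.mul_sum, Finset.mul_sum, ← Finset.sum_neg_distrib, ← Finset.sum_sub_distrib,
      ← Finset.sum_add_distrib]
    exact Finset.sum_congr rfl fun i _ => hsplit i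
  have hnormdelta : ∑ i, (b i - a i) ^ 2 = ‖b - a‖ ^ 2 := by
    rw [esq (b - a)]
    exact Finset.sum_congr rfl fun i _ => by simp
  have hinnergb : ∑ i, g i * b i = ⟪g, b⟫ := (einner g b).symm
  -- minimum of φ
  obtain ⟨i0, hi0⟩ := exists_eq_ciInf_of_finite (f := φ)
  have hm0 : 0 < ⨅ i, φ i := hi0 ▸ hφ i0
  have hmle : ∀ i, (⨅ i, φ i) ≤ φ i := fun i => ciInf_le (Finite.bddBelow_range φ) i
  set cvec : EuclideanSpace ℝ (Fin d) := b - a + (γ / 2) • g with hcvec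
  have hcv : ∀ i, b i - a i + γ / 2 * g i = cvec i := by
    intro i; simp [hcvec]
  have hterm : ∀ i ∈ Finset.univ,
      (φ i * (Real.exp (-2 * hs i) - 1 + 2 * hs i)) * ((b i - a i + γ / 2 * g i) * b i)
        ≤ (2 * h ^ 2 / (⨅ i, φ i)) * (|cvec i| * |b i|) := by
    intro i _
    have hφi : 0 < φ i := hφ i
    have hti : 0 ≤ hs i := by rw [hhs i]; positivity
    have hr0 : 0 ≤ Real.exp (-2 * hs i) - 1 + 2 * hs i := by
      have := Real.add_one_le_exp (-2 * hs i); linarith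
    have hr2 : Real.exp (-2 * hs i) - 1 + 2 * hs i ≤ 2 * hs i ^ 2 := by
      have h5 := exp_neg_le_quad (x := 2 * hs i) (by positivity)
      rw [show -(2 * hs i) = -2 * hs i by ring] at h5
      nlinarith
    have h1 : 0 ≤ φ i * (Real.exp (-2 * hs i) - 1 + 2 * hs i) := mul_nonneg hφi.le hr0
    have h2 : φ i * (Real.exp (-2 * hs i) - 1 + 2 * hs i) ≤ 2 * h ^ 2 / (⨅ i, φ i) := by
      have ha1 : φ i * (Real.exp (-2 * hs i) - 1 + 2 * hs i) ≤ φ i * (2 * hs i ^ 2) :=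
        mul_le_mul_of_nonneg_left hr2 hφi.le
      have ha2 : φ i * (2 * hs i ^ 2) = 2 * h ^ 2 / φ i := by
        rw [hhs i]; field_simp
      have ha3 : 2 * h ^ 2 / φ i ≤ 2 * h ^ 2 / (⨅ i, φ i) :=
        div_le_div_of_nonneg_left (by positivity) hm0 (hmle i)
      linarith
    calc (φ i * (Real.exp (-2 * hs i) - 1 + 2 * hs i)) * ((b i - a i + γ / 2 * g i) * b i)
        ≤ (φ i * (Real.exp (-2 * hs i) - 1 + 2 * hs i)) * |(b i - a i + γ / 2 * g i) * b i| :=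
          mul_le_mul_of_nonneg_left (le_abs_self _) h1
      _ = (φ i * (Real.exp (-2 * hs i) - 1 + 2 * hs i)) * (|b i - a i + γ / 2 * g i| * |b i|) := by
          rw [abs_mul]
      _ ≤ (2 * h ^ 2 / (⨅ i, φ i)) * (|b i - a i + γ / 2 * g i| * |b i|) :=
          mul_le_mul_of_nonneg_right h2 (by positivity)
      _ = (2 * h ^ 2 / (⨅ i, φ i)) * (|cvec i| * |b i|) := by rw [hcv i]
  have hsumE : ∑ i, (φ i * (Real.exp (-2 * hs i) - 1 + 2 * hs i)) * ((b i - a i + γ / 2 * g i) * b i)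
      ≤ (2 * h ^ 2 / (⨅ i, φ i)) * ∑ i, |cvec i| * |b i| := by
    calc ∑ i, (φ i * (Real.exp (-2 * hs i) - 1 + 2 * hs i)) * ((b i - a i + γ / 2 * g i) * b i)
        ≤ ∑ i, (2 * h ^ 2 / (⨅ i, φ i)) * (|cvec i| * |b i|) := Finset.sum_le_sum hterm
      _ = (2 * h ^ 2 / (⨅ i, φ i)) * ∑ i, |cvec i| * |b i| := by rw [← Finset.mul_sum]
  have hcs : ∑ i, |cvec i| * |b i| ≤ ‖cvec‖ * ‖b‖ := by
    have h1 := Finset.sum_mul_sq_le_sq_mul_sq Finset.univ (fun i => |cvec i|) (fun i => |b i|)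
    have h2 : ∑ i, |cvec i| ^ 2 = ‖cvec‖ ^ 2 := by
      rw [esq cvec]; exact Finset.sum_congr rfl fun i _ => sq_abs _
    have h3 : ∑ i, |b i| ^ 2 = ‖b‖ ^ 2 := by
      rw [esq b]; exact Finset.sum_congr rfl fun i _ => sq_abs _
    rw [h2, h3] at h1
    have h4 : 0 ≤ ∑ i, |cvec i| * |b i| :=
      Finset.sum_nonneg fun i _ => mul_nonneg (abs_nonneg _) (abs_nonneg _)
    nlinarith [norm_nonneg cvec, norm_nonneg b, mul_nonneg (norm_nonneg cvec) (norm_nonneg b)]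
  have hcnorm : ‖cvec‖ ≤ 3 / 2 * ‖a‖ + ‖b‖ := by
    have n1 : ‖cvec‖ ≤ ‖b - a‖ + ‖(γ / 2) • g‖ := norm_add_le _ _
    have n2 : ‖(γ / 2) • g‖ = γ / 2 * ‖g‖ := by
      rw [norm_smul, Real.norm_eq_abs, abs_of_pos (by positivity)]
    have n3 : ‖b - a‖ ≤ ‖b‖ + ‖a‖ := norm_sub_le b a
    rw [n2] at n1
    linarith [hgn]
  have hEb : ∑ i, (φ i * (Real.exp (-2 * hs i) - 1 + 2 * hs i)) * ((b i - a i + γ / 2 * g i) * b i)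
      ≤ (2 * h ^ 2 / (⨅ i, φ i)) * ((3 / 2 * ‖a‖ + ‖b‖) * ‖b‖) := by
    refine hsumE.trans ?_
    have w1 : (2 * h ^ 2 / (⨅ i, φ i)) * (∑ i, |cvec i| * |b i|)
        ≤ (2 * h ^ 2 / (⨅ i, φ i)) * (‖cvec‖ * ‖b‖) :=
      mul_le_mul_of_nonneg_left hcs (by positivity)
    have w2 : (2 * h ^ 2 / (⨅ i, φ i)) * (‖cvec‖ * ‖b‖)
        ≤ (2 * h ^ 2 / (⨅ i, φ i)) * ((3 / 2 * ‖a‖ + ‖b‖) * ‖b‖) := by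
      apply mul_le_mul_of_nonneg_left _ (by positivity)
      exact mul_le_mul_of_nonneg_right hcnorm (norm_nonneg b)
    linarith
  have hlast : (2 * h ^ 2 / (⨅ i, φ i)) * ((3 / 2 * ‖a‖ + ‖b‖) * ‖b‖)
      ≤ 3 * h ^ 2 / (⨅ i, φ i) * (‖a‖ ^ 2 + ‖b‖ ^ 2) := by
    have h0 : (3 / 2 * ‖a‖ + ‖b‖) * ‖b‖ * 2 ≤ 3 * (‖a‖ ^ 2 + ‖b‖ ^ 2) := by
      nlinarith [sq_nonneg (2 * ‖a‖ - ‖b‖), sq_nonneg ‖b‖]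
    have hfrac : 0 ≤ h ^ 2 / (⨅ i, φ i) := by positivity
    have := mul_le_mul_of_nonneg_left h0 hfrac
    calc (2 * h ^ 2 / (⨅ i, φ i)) * ((3 / 2 * ‖a‖ + ‖b‖) * ‖b‖)
        = h ^ 2 / (⨅ i, φ i) * ((3 / 2 * ‖a‖ + ‖b‖) * ‖b‖ * 2) := by ring
      _ ≤ h ^ 2 / (⨅ i, φ i) * (3 * (‖a‖ ^ 2 + ‖b‖ ^ 2)) := this
      _ = 3 * h ^ 2 / (⨅ i, φ i) * (‖a‖ ^ 2 + ‖b‖ ^ 2) := by ring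
  have hmainterm : -(h * (‖b - a‖ ^ 2 + γ * ⟪g, b⟫))
      ≤ -(h * (γ * μ / 2 * (‖a‖ ^ 2 + ‖b‖ ^ 2))) :=
    neg_le_neg (mul_le_mul_of_nonneg_left hkey hh.le)
  rw [hsum, hnormdelta, hinnergb]
  nlinarith [hmainterm, hEb, hlast]
end
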